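/- Suppose in addition that max_{1≤j≤N} (‖b_j‖∞ + ‖c_j‖∞) < 1 and max_{1≤j≤N} (‖d_j‖∞ + ‖e_j‖∞) < 1. Then the Edelstein hidden variable fractal interpolation function f_1 (the first component of the fixed point f of the Read–Bajraktarević operator) is Hölder continuous: there exist real numbers K > 0 and α ∈ (0, 1] such that |f_1(t) − f_1(t')| ≤ K |t − t'|^α for all t, t' ∈ I. -/

import Mathlib

/-- Composition of the affine maps along a word (list of indices). -/
def ehvfifLw (L : ℕ → ℝ → ℝ) : List ℕ → ℝ → ℝ
  | [], x => x
  | j :: W, x => L j (ehvfifLw L W x)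

lemma ehvfifLw_nil (L : ℕ → ℝ → ℝ) (x : ℝ) : ehvfifLw L [] x = x := rfl

lemma ehvfifLw_cons (L : ℕ → ℝ → ℝ) (j : ℕ) (W : List ℕ) (x : ℝ) :
    ehvfifLw L (j :: W) x = L j (ehvfifLw L W x) := rfl

/-- A uniform upper bound over finitely many indices. -/
lemma ehvfif_exists_forall_le (n : ℕ) (g : ℕ → ℝ) :
    ∃ M : ℝ, ∀ j, 1 ≤ j → j ≤ n → g j ≤ M := by
  induction n with
  | zero => exact ⟨0, fun j h1 h2 => absurd (h1.trans h2) (by omega)⟩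
  | succ n ih =>
    obtain ⟨M, hM⟩ := ih
    refine ⟨max M (g (n + 1)), fun j h1 h2 => ?_⟩
    rcases Nat.eq_or_lt_of_le h2 with rfl | h
    · exact le_max_right _ _
    · exact (hM j h1 (Nat.lt_succ_iff.mp h)).trans (le_max_left _ _)

/-- A uniform strict upper bound over finitely many indices. -/
lemma ehvfif_exists_uniform_lt (n : ℕ) (g : ℕ → ℝ) (cc : ℝ)
    (h : ∀ j, 1 ≤ j → j ≤ n → g j < cc) :
    ∃ M : ℝ, M < cc ∧ ∀ j, 1 ≤ j → j ≤ n → g j ≤ M := by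
  induction n with
  | zero => exact ⟨cc - 1, by linarith, fun j h1 h2 => absurd (h1.trans h2) (by omega)⟩
  | succ n ih =>
    obtain ⟨M, hMc, hM⟩ := ih (fun j h1 h2 => h j h1 (h2.trans (Nat.le_succ n)))
    refine ⟨max M (g (n + 1)), max_lt hMc (h (n + 1) (by omega) le_rfl), fun j h1 h2 => ?_⟩
    rcases Nat.eq_or_lt_of_le h2 with rfl | hlt
    · exact le_max_right _ _
    · exact (hM j h1 (Nat.lt_succ_iff.mp hlt)).trans (le_max_left _ _)

/-- A uniform positive lower bound over finitely many indices. -/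
lemma ehvfif_exists_uniform_gt (n : ℕ) (g : ℕ → ℝ)
    (h : ∀ j, 1 ≤ j → j ≤ n → 0 < g j) :
    ∃ m : ℝ, 0 < m ∧ ∀ j, 1 ≤ j → j ≤ n → m ≤ g j := by
  induction n with
  | zero => exact ⟨1, one_pos, fun j h1 h2 => absurd (h1.trans h2) (by omega)⟩
  | succ n ih =>
    obtain ⟨m, hm0, hm⟩ := ih (fun j h1 h2 => h j h1 (h2.trans (Nat.le_succ n)))
    refine ⟨min m (g (n + 1)), lt_min hm0 (h (n + 1) (by omega) le_rfl), fun j h1 h2 => ?_⟩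
    rcases Nat.eq_or_lt_of_le h2 with rfl | hlt
    · exact min_le_right _ _
    · exact (min_le_left _ _).trans (hm j h1 (Nat.lt_succ_iff.mp hlt))

set_option maxHeartbeats 1000000 in
theorem EHVFIF_smoothness
    (N : ℕ) (hN : 0 < N)
    (t v w : ℕ → ℝ)
    (htmono : ∀ j, j < N → t j < t (j + 1))
    (a fc : ℕ → ℝ) (L : ℕ → ℝ → ℝ)
    (hL : ∀ j, 1 ≤ j → j ≤ N → ∀ x : ℝ, L j x = a j * x + fc j)
    (ha : ∀ j, 1 ≤ j → j ≤ N → a j ≠ 0 ∧ |a j| < 1)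
    (hL0 : ∀ j, 1 ≤ j → j ≤ N → L j (t 0) = t (j - 1))
    (hLN : ∀ j, 1 ≤ j → j ≤ N → L j (t N) = t j)
    (b c d e p q : ℕ → ℝ → ℝ)
    (hLip : ∀ j, 1 ≤ j → j ≤ N → ∀ g ∈ ([b j, c j, d j, e j, p j, q j] : List (ℝ → ℝ)),
      ∃ Kg : NNReal, LipschitzOnWith Kg g (Set.Icc (t 0) (t N)))
    (hbd : ∀ j, 1 ≤ j → j ≤ N → ∃ B D : ℝ, B + D ≤ 1 ∧
      (∀ x ∈ Set.Icc (t 0) (t N), |b j x| ≤ B) ∧ (∀ x ∈ Set.Icc (t 0) (t N), |d j x| ≤ D))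
    (hce : ∀ j, 1 ≤ j → j ≤ N → ∃ C E : ℝ, C + E ≤ 1 ∧
      (∀ x ∈ Set.Icc (t 0) (t N), |c j x| ≤ C) ∧ (∀ x ∈ Set.Icc (t 0) (t N), |e j x| ≤ E))
    (s r : ℕ → ℝ → ℝ)
    (hs : ∀ j, 1 ≤ j → j ≤ N → ∀ x y : ℝ, x ≠ y → |s j x - s j y| < |x - y|)
    (hr : ∀ j, 1 ≤ j → j ≤ N → ∀ x y : ℝ, x ≠ y → |r j x - r j y| < |x - y|)
    (F : ℕ → ℝ → ℝ × ℝ → ℝ × ℝ)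
    (hF : ∀ j x vw, F j x vw = (b j x * s j vw.1 + c j x * r j vw.2 + p j x,
                                d j x * s j vw.1 + e j x * r j vw.2 + q j x))
    (hF0 : ∀ j, 1 ≤ j → j ≤ N → F j (t 0) (v 0, w 0) = (v (j - 1), w (j - 1)))
    (hFN : ∀ j, 1 ≤ j → j ≤ N → F j (t N) (v N, w N) = (v j, w j))
    (hbc : ∃ γ : ℝ, γ < 1 ∧ ∀ j, 1 ≤ j → j ≤ N → ∀ x ∈ Set.Icc (t 0) (t N),
      |b j x| + |c j x| ≤ γ)
    (hde : ∃ γ : ℝ, γ < 1 ∧ ∀ j, 1 ≤ j → j ≤ N → ∀ x ∈ Set.Icc (t 0) (t N),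
      |d j x| + |e j x| ≤ γ)
    (f : ℝ → ℝ × ℝ) (hfc : ContinuousOn f (Set.Icc (t 0) (t N)))
    (hfe : ∀ j, 1 ≤ j → j ≤ N → ∀ x ∈ Set.Icc (t 0) (t N), f (L j x) = F j x (f x))
    (hfi : ∀ j, j ≤ N → f (t j) = (v j, w j))
    :
    ∃ C : ℝ, 0 < C ∧ ∃ α : ℝ, 0 < α ∧ α ≤ 1 ∧
      ∀ x ∈ Set.Icc (t 0) (t N), ∀ y ∈ Set.Icc (t 0) (t N),
        |(f x).1 - (f y).1| ≤ C * |x - y| ^ α := by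
  classical
  -- basic monotonicity of the nodes
  have tmono : ∀ i j : ℕ, i ≤ j → j ≤ N → t i ≤ t j := by
    intro i j
    induction j with
    | zero => intro hij _; have : i = 0 := Nat.le_zero.mp hij; simp [this]
    | succ n ih =>
      intro hij hjN
      rcases Nat.eq_or_lt_of_le hij with rfl | hlt
      · exact le_rfl
      · exact (ih (Nat.lt_succ_iff.mp hlt) (by omega)).trans (htmono n (by omega)).le
  have tlt : ∀ i j : ℕ, i < j → j ≤ N → t i < t j := by
    intro i j hij hjN
    have h1 : t i ≤ t (j - 1) := tmono i (j - 1) (by omega) (by omega)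
    have h2 : t (j - 1) < t (j - 1 + 1) := htmono (j - 1) (by omega)
    have h3 : j - 1 + 1 = j := by omega
    rw [h3] at h2
    exact lt_of_le_of_lt h1 h2
  have hT : (0:ℝ) < t N - t 0 := sub_pos.mpr (tlt 0 N hN le_rfl)
  -- the slopes are positive
  have hapos : ∀ j, 1 ≤ j → j ≤ N → 0 < a j := by
    intro j h1 h2
    have e1 := hL0 j h1 h2
    have e2 := hLN j h1 h2
    rw [hL j h1 h2] at e1 e2
    have h3 : t (j - 1) < t j := tlt (j - 1) j (by omega) h2
    by_contra hcon
    push_neg at hcon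
    have hmul : a j * (t N - t 0) ≤ 0 * (t N - t 0) :=
      mul_le_mul_of_nonneg_right hcon hT.le
    linarith [hmul]
  have ha1 : ∀ j, 1 ≤ j → j ≤ N → a j < 1 := by
    intro j h1 h2
    exact lt_of_le_of_lt (le_abs_self _) (ha j h1 h2).2
  -- L j maps I into I
  have hLmaps : ∀ j, 1 ≤ j → j ≤ N → ∀ x ∈ Set.Icc (t 0) (t N),
      L j x ∈ Set.Icc (t 0) (t N) := by
    intro j h1 h2 x hx
    obtain ⟨hx1, hx2⟩ := hx
    have haj := hapos j h1 h2
    have e1 := hL0 j h1 h2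
    have e2 := hLN j h1 h2
    rw [hL j h1 h2] at e1 e2 ⊢
    have hb1 : t 0 ≤ t (j - 1) := tmono 0 (j - 1) (by omega) (by omega)
    have hb2 : t j ≤ t N := tmono j N h2 le_rfl
    constructor
    · linarith [mul_nonneg haj.le (sub_nonneg.mpr hx1)]
    · linarith [mul_nonneg haj.le (sub_nonneg.mpr hx2)]
  -- uniform bounds on the slopes
  obtain ⟨amax, hamax1, hamax2⟩ := ehvfif_exists_uniform_lt N a 1 ha1
  obtain ⟨amin, hamin0, hamin2⟩ := ehvfif_exists_uniform_gt N a hapos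
  have haminmax : amin ≤ amax := (hamin2 1 le_rfl hN).trans (hamax2 1 le_rfl hN)
  have hamax0 : 0 < amax := lt_of_lt_of_le hamin0 haminmax
  -- the contraction factor
  obtain ⟨γ₁, hγ₁, hbc1⟩ := hbc
  obtain ⟨γ₂, hγ₂, hde1⟩ := hde
  obtain ⟨γ, hγdef⟩ : ∃ γ : ℝ, γ = max (max γ₁ γ₂) 0 := ⟨_, rfl⟩
  have hγlt : γ < 1 := by rw [hγdef]; exact max_lt (max_lt hγ₁ hγ₂) one_pos
  have hγ0 : 0 ≤ γ := by rw [hγdef]; exact le_max_right _ _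
  have hγ₁le : γ₁ ≤ γ := by rw [hγdef]; exact (le_max_left γ₁ γ₂).trans (le_max_left _ _)
  have hγ₂le : γ₂ ≤ γ := by rw [hγdef]; exact (le_max_right γ₁ γ₂).trans (le_max_left _ _)
  -- θ, strictly dominating amax and γ
  obtain ⟨θ, hθdef⟩ : ∃ θ : ℝ, θ = (max amax γ + 1) / 2 := ⟨_, rfl⟩
  have hθa : amax < θ := by
    rw [hθdef]
    have h1 := le_max_left amax γ
    have h2 : max amax γ < 1 := max_lt hamax1 hγlt
    linarith
  have hθγ : γ < θ := by
    rw [hθdef]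
    have h1 := le_max_right amax γ
    have h2 : max amax γ < 1 := max_lt hamax1 hγlt
    linarith
  have hθ1 : θ < 1 := by
    rw [hθdef]
    have h2 : max amax γ < 1 := max_lt hamax1 hγlt
    linarith
  have hθ0 : 0 < θ := lt_of_lt_of_le hamax0 hθa.le
  -- bound on f
  obtain ⟨M0', hM0'⟩ := isCompact_Icc.exists_bound_of_continuousOn hfc
  obtain ⟨M0, hM0def⟩ : ∃ M0 : ℝ, M0 = max M0' 0 := ⟨_, rfl⟩
  have hM00 : 0 ≤ M0 := by rw [hM0def]; exact le_max_right _ _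
  have hM0'le : M0' ≤ M0 := by rw [hM0def]; exact le_max_left _ _
  have hM0 : ∀ x ∈ Set.Icc (t 0) (t N), |(f x).1| ≤ M0 ∧ |(f x).2| ≤ M0 := by
    intro x hx
    have h := hM0' x hx
    have h1 : ‖(f x).1‖ ≤ ‖f x‖ := norm_fst_le (f x)
    have h2 : ‖(f x).2‖ ≤ ‖f x‖ := norm_snd_le (f x)
    rw [Real.norm_eq_abs] at h1 h2
    exact ⟨h1.trans (h.trans hM0'le), h2.trans (h.trans hM0'le)⟩
  -- non-strict Edelstein estimates
  have hs' : ∀ j, 1 ≤ j → j ≤ N → ∀ x y : ℝ, |s j x - s j y| ≤ |x - y| := by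
    intro j h1 h2 x y
    rcases eq_or_ne x y with rfl | hne
    · simp
    · exact (hs j h1 h2 x y hne).le
  have hr' : ∀ j, 1 ≤ j → j ≤ N → ∀ x y : ℝ, |r j x - r j y| ≤ |x - y| := by
    intro j h1 h2 x y
    rcases eq_or_ne x y with rfl | hne
    · simp
    · exact (hr j h1 h2 x y hne).le
  -- uniform bounds on s j ∘ f₁ and r j ∘ f₂
  obtain ⟨Ms, hMs0, hMs⟩ : ∃ Ms : ℝ, 0 ≤ Ms ∧ ∀ j, 1 ≤ j → j ≤ N →
      ∀ x ∈ Set.Icc (t 0) (t N), |s j ((f x).1)| ≤ Ms := by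
    obtain ⟨M, hM⟩ := ehvfif_exists_forall_le N (fun j => |s j 0| + M0)
    refine ⟨max M 0, le_max_right _ _, fun j h1 h2 x hx => ?_⟩
    have h3 : |s j ((f x).1) - s j 0| ≤ |(f x).1 - 0| := hs' j h1 h2 _ _
    rw [sub_zero] at h3
    have h4 := (hM0 x hx).1
    have h5 : |s j ((f x).1)| ≤ |s j ((f x).1) - s j 0| + |s j 0| := by
      have := abs_add_le (s j ((f x).1) - s j 0) (s j 0)
      simpa using this
    have h6 := hM j h1 h2
    have : |s j ((f x).1)| ≤ |s j 0| + M0 := by linarith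
    exact this.trans (h6.trans (le_max_left _ _))
  obtain ⟨Mr, hMr0, hMr⟩ : ∃ Mr : ℝ, 0 ≤ Mr ∧ ∀ j, 1 ≤ j → j ≤ N →
      ∀ x ∈ Set.Icc (t 0) (t N), |r j ((f x).2)| ≤ Mr := by
    obtain ⟨M, hM⟩ := ehvfif_exists_forall_le N (fun j => |r j 0| + M0)
    refine ⟨max M 0, le_max_right _ _, fun j h1 h2 x hx => ?_⟩
    have h3 : |r j ((f x).2) - r j 0| ≤ |(f x).2 - 0| := hr' j h1 h2 _ _
    rw [sub_zero] at h3
    have h4 := (hM0 x hx).2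
    have h5 : |r j ((f x).2)| ≤ |r j ((f x).2) - r j 0| + |r j 0| := by
      have := abs_add_le (r j ((f x).2) - r j 0) (r j 0)
      simpa using this
    have h6 := hM j h1 h2
    have : |r j ((f x).2)| ≤ |r j 0| + M0 := by linarith
    exact this.trans (h6.trans (le_max_left _ _))
  -- uniform Lipschitz constant for all coefficient functions
  obtain ⟨K₀, hK₀0, hK₀⟩ : ∃ K₀ : ℝ, 0 ≤ K₀ ∧ ∀ j, 1 ≤ j → j ≤ N →
      ∀ g ∈ ([b j, c j, d j, e j, p j, q j] : List (ℝ → ℝ)),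
      ∀ x ∈ Set.Icc (t 0) (t N), ∀ y ∈ Set.Icc (t 0) (t N),
        |g x - g y| ≤ K₀ * |x - y| := by
    have hK1 : ∀ j : ℕ, ∃ Kj : ℝ, 0 ≤ Kj ∧ (1 ≤ j → j ≤ N →
        ∀ g ∈ ([b j, c j, d j, e j, p j, q j] : List (ℝ → ℝ)),
        ∀ x ∈ Set.Icc (t 0) (t N), ∀ y ∈ Set.Icc (t 0) (t N),
          |g x - g y| ≤ Kj * |x - y|) := by
      intro j
      by_cases hj : 1 ≤ j ∧ j ≤ N
      · obtain ⟨h1, h2⟩ := hj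
        obtain ⟨K1, hKb⟩ := hLip j h1 h2 (b j) (by simp)
        obtain ⟨K2, hKcc⟩ := hLip j h1 h2 (c j) (by simp)
        obtain ⟨K3, hKd⟩ := hLip j h1 h2 (d j) (by simp)
        obtain ⟨K4, hKe⟩ := hLip j h1 h2 (e j) (by simp)
        obtain ⟨K5, hKp⟩ := hLip j h1 h2 (p j) (by simp)
        obtain ⟨K6, hKq⟩ := hLip j h1 h2 (q j) (by simp)
        refine ⟨(K1 : ℝ) + K2 + K3 + K4 + K5 + K6, by positivity, fun _ _ g hg x hx y hy => ?_⟩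
        have key : ∀ (gg : ℝ → ℝ) (Kg : NNReal), LipschitzOnWith Kg gg (Set.Icc (t 0) (t N)) →
            |gg x - gg y| ≤ (Kg : ℝ) * |x - y| := by
          intro gg Kg hKg
          have := hKg.dist_le_mul x hx y hy
          rwa [Real.dist_eq, Real.dist_eq] at this
        have hxy : (0:ℝ) ≤ |x - y| := abs_nonneg _
        have c1 := K1.coe_nonneg
        have c2 := K2.coe_nonneg
        have c3 := K3.coe_nonneg
        have c4 := K4.coe_nonneg
        have c5 := K5.coe_nonneg
        have c6 := K6.coe_nonneg
        simp only [List.mem_cons, List.not_mem_nil, or_false] at hg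
        rcases hg with rfl | rfl | rfl | rfl | rfl | rfl
        · exact (key _ _ hKb).trans (mul_le_mul_of_nonneg_right (by linarith) hxy)
        · exact (key _ _ hKcc).trans (mul_le_mul_of_nonneg_right (by linarith) hxy)
        · exact (key _ _ hKd).trans (mul_le_mul_of_nonneg_right (by linarith) hxy)
        · exact (key _ _ hKe).trans (mul_le_mul_of_nonneg_right (by linarith) hxy)
        · exact (key _ _ hKp).trans (mul_le_mul_of_nonneg_right (by linarith) hxy)
        · exact (key _ _ hKq).trans (mul_le_mul_of_nonneg_right (by linarith) hxy)
      · exact ⟨0, le_rfl, fun h1 h2 => absurd ⟨h1, h2⟩ hj⟩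
    choose Kf hKf using hK1
    obtain ⟨M, hM⟩ := ehvfif_exists_forall_le N Kf
    refine ⟨max M 0, le_max_right _ _, fun j h1 h2 g hg x hx y hy => ?_⟩
    have hb := (hKf j).2 h1 h2 g hg x hx y hy
    have hle : Kf j ≤ max M 0 := (hM j h1 h2).trans (le_max_left _ _)
    exact hb.trans (mul_le_mul_of_nonneg_right hle (abs_nonneg _))
  obtain ⟨Kc, hKcdef⟩ : ∃ Kc : ℝ, Kc = K₀ * (Ms + Mr + 1) := ⟨_, rfl⟩
  have hKc0 : 0 ≤ Kc := by rw [hKcdef]; exact mul_nonneg hK₀0 (by linarith)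
  -- the one-step oscillation estimate
  have step : ∀ j, 1 ≤ j → j ≤ N → ∀ u ∈ Set.Icc (t 0) (t N), ∀ u' ∈ Set.Icc (t 0) (t N),
      max |(f (L j u)).1 - (f (L j u')).1| |(f (L j u)).2 - (f (L j u')).2|
        ≤ γ * max |(f u).1 - (f u').1| |(f u).2 - (f u').2| + Kc * |u - u'| := by
    intro j h1 h2 u hu u' hu'
    have e1 : f (L j u) = F j u (f u) := hfe j h1 h2 u hu
    have e2 : f (L j u') = F j u' (f u') := hfe j h1 h2 u' hu'
    have c1 : (f (L j u)).1 = b j u * s j ((f u).1) + c j u * r j ((f u).2) + p j u := by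
      rw [e1, hF]
    have c2 : (f (L j u)).2 = d j u * s j ((f u).1) + e j u * r j ((f u).2) + q j u := by
      rw [e1, hF]
    have c1' : (f (L j u')).1 = b j u' * s j ((f u').1) + c j u' * r j ((f u').2) + p j u' := by
      rw [e2, hF]
    have c2' : (f (L j u')).2 = d j u' * s j ((f u').1) + e j u' * r j ((f u').2) + q j u' := by
      rw [e2, hF]
    obtain ⟨Mx, hMxdef⟩ :
        ∃ Mx : ℝ, Mx = max |(f u).1 - (f u').1| |(f u).2 - (f u').2| := ⟨_, rfl⟩
    have hMx0 : 0 ≤ Mx := by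
      rw [hMxdef]; exact le_trans (abs_nonneg _) (le_max_left _ _)
    have hSd : |s j ((f u).1) - s j ((f u').1)| ≤ Mx := by
      rw [hMxdef]; exact (hs' j h1 h2 _ _).trans (le_max_left _ _)
    have hRd : |r j ((f u).2) - r j ((f u').2)| ≤ Mx := by
      rw [hMxdef]; exact (hr' j h1 h2 _ _).trans (le_max_right _ _)
    have hS2 : |s j ((f u').1)| ≤ Ms := hMs j h1 h2 u' hu'
    have hR2 : |r j ((f u').2)| ≤ Mr := hMr j h1 h2 u' hu'
    have hKd0 : 0 ≤ K₀ * |u - u'| := mul_nonneg hK₀0 (abs_nonneg _)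
    have hbdif : |b j u - b j u'| ≤ K₀ * |u - u'| := hK₀ j h1 h2 (b j) (by simp) u hu u' hu'
    have hcdif : |c j u - c j u'| ≤ K₀ * |u - u'| := hK₀ j h1 h2 (c j) (by simp) u hu u' hu'
    have hddif : |d j u - d j u'| ≤ K₀ * |u - u'| := hK₀ j h1 h2 (d j) (by simp) u hu u' hu'
    have hedif : |e j u - e j u'| ≤ K₀ * |u - u'| := hK₀ j h1 h2 (e j) (by simp) u hu u' hu'
    have hpdif : |p j u - p j u'| ≤ K₀ * |u - u'| := hK₀ j h1 h2 (p j) (by simp) u hu u' hu'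
    have hqdif : |q j u - q j u'| ≤ K₀ * |u - u'| := hK₀ j h1 h2 (q j) (by simp) u hu u' hu'
    have hbcu : |b j u| + |c j u| ≤ γ := (hbc1 j h1 h2 u hu).trans hγ₁le
    have hdeu : |d j u| + |e j u| ≤ γ := (hde1 j h1 h2 u hu).trans hγ₂le
    have arith : ∀ B₁ B₂ C₁ C₂ P₁ P₂ X₁ X₂ Y₁ Y₂ : ℝ,
        |X₁ - X₂| ≤ Mx → |Y₁ - Y₂| ≤ Mx → |B₁| + |C₁| ≤ γ →
        |B₁ - B₂| ≤ K₀ * |u - u'| → |C₁ - C₂| ≤ K₀ * |u - u'| → |P₁ - P₂| ≤ K₀ * |u - u'| →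
        |X₂| ≤ Ms → |Y₂| ≤ Mr →
        |(B₁ * X₁ + C₁ * Y₁ + P₁) - (B₂ * X₂ + C₂ * Y₂ + P₂)| ≤ γ * Mx + Kc * |u - u'| := by
      intro B₁ B₂ C₁ C₂ P₁ P₂ X₁ X₂ Y₁ Y₂ hX hY hBC hB hC hP hX2 hY2
      have hrw : (B₁ * X₁ + C₁ * Y₁ + P₁) - (B₂ * X₂ + C₂ * Y₂ + P₂)
          = B₁ * (X₁ - X₂) + (B₁ - B₂) * X₂ + C₁ * (Y₁ - Y₂) + (C₁ - C₂) * Y₂ + (P₁ - P₂) := by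
        ring
      rw [hrw]
      have t1 : |B₁ * (X₁ - X₂)| ≤ |B₁| * Mx := by
        rw [abs_mul]; exact mul_le_mul_of_nonneg_left hX (abs_nonneg _)
      have t2 : |(B₁ - B₂) * X₂| ≤ (K₀ * |u - u'|) * Ms := by
        rw [abs_mul]; exact mul_le_mul hB hX2 (abs_nonneg _) hKd0
      have t3 : |C₁ * (Y₁ - Y₂)| ≤ |C₁| * Mx := by
        rw [abs_mul]; exact mul_le_mul_of_nonneg_left hY (abs_nonneg _)
      have t4 : |(C₁ - C₂) * Y₂| ≤ (K₀ * |u - u'|) * Mr := by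
        rw [abs_mul]; exact mul_le_mul hC hY2 (abs_nonneg _) hKd0
      have habs1 := abs_add_le (B₁ * (X₁ - X₂) + (B₁ - B₂) * X₂ + C₁ * (Y₁ - Y₂) + (C₁ - C₂) * Y₂)
        (P₁ - P₂)
      have habs2 := abs_add_le (B₁ * (X₁ - X₂) + (B₁ - B₂) * X₂ + C₁ * (Y₁ - Y₂)) ((C₁ - C₂) * Y₂)
      have habs3 := abs_add_le (B₁ * (X₁ - X₂) + (B₁ - B₂) * X₂) (C₁ * (Y₁ - Y₂))
      have habs4 := abs_add_le (B₁ * (X₁ - X₂)) ((B₁ - B₂) * X₂)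
      have hbc' : (|B₁| + |C₁|) * Mx ≤ γ * Mx := mul_le_mul_of_nonneg_right hBC hMx0
      have hKcexp : Kc * |u - u'| = (K₀ * |u - u'|) * Ms + (K₀ * |u - u'|) * Mr
          + (K₀ * |u - u'|) := by rw [hKcdef]; ring
      linarith [t1, t2, t3, t4, habs1, habs2, habs3, habs4, hbc', hP, hKcexp]
    rw [c1, c2, c1', c2', ← hMxdef]
    apply max_le
    · exact arith (b j u) (b j u') (c j u) (c j u') (p j u) (p j u') _ _ _ _
        hSd hRd hbcu hbdif hcdif hpdif hS2 hR2
    · exact arith (d j u) (d j u') (e j u) (e j u') (q j u) (q j u') _ _ _ _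
        hSd hRd hdeu hddif hedif hqdif hS2 hR2
  -- facts about compositions along words
  have LwMaps : ∀ W : List ℕ, (∀ j ∈ W, 1 ≤ j ∧ j ≤ N) →
      ∀ x ∈ Set.Icc (t 0) (t N), ehvfifLw L W x ∈ Set.Icc (t 0) (t N) := by
    intro W
    induction W with
    | nil => intro _ x hx; exact hx
    | cons j W ih =>
      intro hW x hx
      have hj := hW j (List.mem_cons_self)
      have hWv : ∀ i ∈ W, 1 ≤ i ∧ i ≤ N := fun i hi => hW i (List.mem_cons_of_mem _ hi)
      rw [ehvfifLw_cons]
      exact hLmaps j hj.1 hj.2 _ (ih hWv x hx)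
  have LwDiff : ∀ W : List ℕ, (∀ j ∈ W, 1 ≤ j ∧ j ≤ N) →
      ∀ x y : ℝ, |ehvfifLw L W x - ehvfifLw L W y| ≤ amax ^ W.length * |x - y| := by
    intro W
    induction W with
    | nil => intro _ x y; simp [ehvfifLw]
    | cons j W ih =>
      intro hW x y
      have hj := hW j (List.mem_cons_self)
      have hWv : ∀ i ∈ W, 1 ≤ i ∧ i ≤ N := fun i hi => hW i (List.mem_cons_of_mem _ hi)
      have haj := hapos j hj.1 hj.2
      have hja : a j ≤ amax := hamax2 j hj.1 hj.2
      rw [ehvfifLw_cons, ehvfifLw_cons, hL j hj.1 hj.2, hL j hj.1 hj.2]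
      have hring : a j * ehvfifLw L W x + fc j - (a j * ehvfifLw L W y + fc j)
          = a j * (ehvfifLw L W x - ehvfifLw L W y) := by ring
      rw [hring, abs_mul, abs_of_pos haj]
      calc a j * |ehvfifLw L W x - ehvfifLw L W y|
          ≤ amax * (amax ^ W.length * |x - y|) :=
            mul_le_mul hja (ih hWv x y) (abs_nonneg _) hamax0.le
        _ = amax ^ (j :: W).length * |x - y| := by
            rw [List.length_cons, pow_succ]; ring
  have LwLower : ∀ W : List ℕ, (∀ j ∈ W, 1 ≤ j ∧ j ≤ N) →
      amin ^ W.length * (t N - t 0) ≤ ehvfifLw L W (t N) - ehvfifLw L W (t 0) := by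
    intro W
    induction W with
    | nil => simp [ehvfifLw]
    | cons j W ih =>
      intro hW
      have hj := hW j (List.mem_cons_self)
      have hWv : ∀ i ∈ W, 1 ≤ i ∧ i ≤ N := fun i hi => hW i (List.mem_cons_of_mem _ hi)
      have haj := hapos j hj.1 hj.2
      have hprev := ih hWv
      rw [ehvfifLw_cons, ehvfifLw_cons, hL j hj.1 hj.2, hL j hj.1 hj.2]
      have hring : a j * ehvfifLw L W (t N) + fc j - (a j * ehvfifLw L W (t 0) + fc j)
          = a j * (ehvfifLw L W (t N) - ehvfifLw L W (t 0)) := by ring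
      rw [hring, List.length_cons]
      have h0 : (0:ℝ) ≤ amin ^ W.length * (t N - t 0) :=
        mul_nonneg (pow_nonneg hamin0.le _) hT.le
      calc amin ^ (W.length + 1) * (t N - t 0)
          = amin * (amin ^ W.length * (t N - t 0)) := by ring
        _ ≤ a j * (ehvfifLw L W (t N) - ehvfifLw L W (t 0)) :=
            mul_le_mul (hamin2 j hj.1 hj.2) hprev h0 haj.le
  have LwPre : ∀ W : List ℕ, (∀ j ∈ W, 1 ≤ j ∧ j ≤ N) →
      ∀ z : ℝ, ehvfifLw L W (t 0) ≤ z → z ≤ ehvfifLw L W (t N) →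
      ∃ x ∈ Set.Icc (t 0) (t N), ehvfifLw L W x = z := by
    intro W
    induction W with
    | nil => intro _ z h1 h2; exact ⟨z, ⟨h1, h2⟩, rfl⟩
    | cons j W ih =>
      intro hW z h1 h2
      have hj := hW j (List.mem_cons_self)
      have hWv : ∀ i ∈ W, 1 ≤ i ∧ i ≤ N := fun i hi => hW i (List.mem_cons_of_mem _ hi)
      have haj := hapos j hj.1 hj.2
      set X := (z - fc j) / a j with hXdef
      have hLX : L j X = z := by
        rw [hL j hj.1 hj.2, hXdef]
        field_simp
        ring
      have hXl : ehvfifLw L W (t 0) ≤ X := by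
        rw [ehvfifLw_cons, hL j hj.1 hj.2] at h1
        rw [hXdef, le_div_iff₀ haj]
        linarith [mul_comm (a j) (ehvfifLw L W (t 0)),
          mul_comm (ehvfifLw L W (t 0)) (a j)]
      have hXr : X ≤ ehvfifLw L W (t N) := by
        rw [ehvfifLw_cons, hL j hj.1 hj.2] at h2
        rw [hXdef, div_le_iff₀ haj]
        linarith [mul_comm (a j) (ehvfifLw L W (t N)),
          mul_comm (ehvfifLw L W (t N)) (a j)]
      obtain ⟨x, hxI, hxe⟩ := ih hWv X hXl hXr
      exact ⟨x, hxI, by rw [ehvfifLw_cons, hxe, hLX]⟩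
  -- the oscillation on level-n cells
  obtain ⟨Ac, hAcdef⟩ : ∃ Ac : ℝ, Ac = 2 * M0 + Kc * (t N - t 0) / (θ - γ) + 1 := ⟨_, rfl⟩
  have hθγpos : 0 < θ - γ := sub_pos.mpr hθγ
  have hAq : 0 ≤ Kc * (t N - t 0) / (θ - γ) :=
    div_nonneg (mul_nonneg hKc0 hT.le) hθγpos.le
  have hAc0 : 0 < Ac := by rw [hAcdef]; linarith [hAq, hM00]
  have h2M : 2 * M0 ≤ Ac := by rw [hAcdef]; linarith [hAq]
  have osc : ∀ W : List ℕ, (∀ j ∈ W, 1 ≤ j ∧ j ≤ N) →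
      ∀ x ∈ Set.Icc (t 0) (t N), ∀ y ∈ Set.Icc (t 0) (t N),
      max |(f (ehvfifLw L W x)).1 - (f (ehvfifLw L W y)).1|
          |(f (ehvfifLw L W x)).2 - (f (ehvfifLw L W y)).2| ≤ Ac * θ ^ W.length := by
    intro W
    induction W with
    | nil =>
      intro _ x hx y hy
      rw [ehvfifLw_nil, ehvfifLw_nil, List.length_nil, pow_zero, mul_one]
      have h1 := (hM0 x hx).1
      have h2 := (hM0 y hy).1
      have h3 := (hM0 x hx).2
      have h4 := (hM0 y hy).2
      apply max_le
      · have h5 : |(f x).1 - (f y).1| ≤ |(f x).1| + |(f y).1| := abs_sub _ _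
        linarith [h2M]
      · have h5 : |(f x).2 - (f y).2| ≤ |(f x).2| + |(f y).2| := abs_sub _ _
        linarith [h2M]
    | cons j W ih =>
      intro hW x hx y hy
      have hj := hW j (List.mem_cons_self)
      have hWv : ∀ i ∈ W, 1 ≤ i ∧ i ≤ N := fun i hi => hW i (List.mem_cons_of_mem _ hi)
      have hU : ehvfifLw L W x ∈ Set.Icc (t 0) (t N) := LwMaps W hWv x hx
      have hU' : ehvfifLw L W y ∈ Set.Icc (t 0) (t N) := LwMaps W hWv y hy
      have hstep := step j hj.1 hj.2 _ hU _ hU'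
      rw [ehvfifLw_cons, ehvfifLw_cons]
      refine hstep.trans ?_
      have hIH := ih hWv x hx y hy
      have hxyT : |x - y| ≤ t N - t 0 := by
        rw [abs_le]
        obtain ⟨hx1, hx2⟩ := hx
        obtain ⟨hy1, hy2⟩ := hy
        constructor <;> linarith
      have hd : |ehvfifLw L W x - ehvfifLw L W y| ≤ amax ^ W.length * (t N - t 0) :=
        (LwDiff W hWv x y).trans
          (mul_le_mul_of_nonneg_left hxyT (pow_nonneg hamax0.le _))
      have hamaxθ : amax ^ W.length ≤ θ ^ W.length := pow_le_pow_left₀ hamax0.le hθa.le _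
      have hθn : (0:ℝ) ≤ θ ^ W.length := pow_nonneg hθ0.le _
      have key : γ * Ac + Kc * (t N - t 0) ≤ Ac * θ := by
        have hfe' : Kc * (t N - t 0) / (θ - γ) * (θ - γ) = Kc * (t N - t 0) :=
          div_mul_cancel₀ _ (ne_of_gt hθγpos)
        have hpos : 0 ≤ (2 * M0 + 1) * (θ - γ) := mul_nonneg (by linarith) hθγpos.le
        have hexp : Ac * θ - γ * Ac
            = (2 * M0 + 1) * (θ - γ) + Kc * (t N - t 0) / (θ - γ) * (θ - γ) := by
          rw [hAcdef]; ring
        linarith [hexp, hfe', hpos]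
      have hkey2 := mul_le_mul_of_nonneg_left key hθn
      calc γ * max |(f (ehvfifLw L W x)).1 - (f (ehvfifLw L W y)).1|
              |(f (ehvfifLw L W x)).2 - (f (ehvfifLw L W y)).2|
            + Kc * |ehvfifLw L W x - ehvfifLw L W y|
          ≤ γ * (Ac * θ ^ W.length) + Kc * (amax ^ W.length * (t N - t 0)) :=
            add_le_add (mul_le_mul_of_nonneg_left hIH hγ0)
              (mul_le_mul_of_nonneg_left hd hKc0)
        _ ≤ γ * (Ac * θ ^ W.length) + Kc * (θ ^ W.length * (t N - t 0)) := by
            have := mul_le_mul_of_nonneg_left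
              (mul_le_mul_of_nonneg_right hamaxθ hT.le) hKc0
            linarith
        _ ≤ Ac * θ ^ (j :: W).length := by
            rw [List.length_cons, pow_succ]
            linarith [hkey2]
  -- locating a point in a first-level interval
  have findj : ∀ u : ℝ, t 0 ≤ u → u < t N →
      ∃ j, 1 ≤ j ∧ j ≤ N ∧ t (j - 1) ≤ u ∧ u < t j := by
    intro u h0 h1
    have hex : ∃ j : ℕ, 1 ≤ j ∧ u < t j := ⟨N, hN, h1⟩
    set j := Nat.find hex with hjdef
    have hfind := Nat.find_spec hex
    have hjN : j ≤ N := Nat.find_le ⟨hN, h1⟩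
    refine ⟨j, hfind.1, hjN, ?_, hfind.2⟩
    rcases Nat.eq_or_lt_of_le hfind.1 with heq | hlt
    · have hj1 : j - 1 = 0 := by omega
      rw [hj1]; exact h0
    · have hmin := Nat.find_min hex (show j - 1 < j by omega)
      by_contra hc
      push_neg at hc
      exact hmin ⟨by omega, hc⟩
  -- every point lies in a level-n cell (not its right endpoint)
  have rn2 : ∀ n : ℕ, ∀ u : ℝ, t 0 ≤ u → u < t N →
      ∃ W : List ℕ, W.length = n ∧ (∀ j ∈ W, 1 ≤ j ∧ j ≤ N) ∧
        ehvfifLw L W (t 0) ≤ u ∧ u < ehvfifLw L W (t N) := by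
    intro n
    induction n with
    | zero =>
      intro u h0 h1
      exact ⟨[], rfl, by simp, by rw [ehvfifLw_nil]; exact h0, by rw [ehvfifLw_nil]; exact h1⟩
    | succ n ih =>
      intro u h0 h1
      obtain ⟨j, hj1, hjN, hu1, hu2⟩ := findj u h0 h1
      have haj := hapos j hj1 hjN
      set X := (u - fc j) / a j with hXdef
      have hLX : L j X = u := by
        rw [hL j hj1 hjN, hXdef]; field_simp; ring
      have e0 := hL0 j hj1 hjN
      have eN := hLN j hj1 hjN
      rw [hL j hj1 hjN] at e0 eN
      have hX0 : t 0 ≤ X := by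
        rw [hXdef, le_div_iff₀ haj]
        linarith [hu1, e0]
      have hXN : X < t N := by
        rw [hXdef, div_lt_iff₀ haj]
        linarith [hu2, eN]
      obtain ⟨W, hlen, hWv, hw1, hw2⟩ := ih X hX0 hXN
      refine ⟨j :: W, by simp [hlen], ?_, ?_, ?_⟩
      · intro i hi
        rcases List.mem_cons.mp hi with rfl | hi'
        · exact ⟨hj1, hjN⟩
        · exact hWv i hi'
      · rw [ehvfifLw_cons]
        calc L j (ehvfifLw L W (t 0)) ≤ L j X := by
              rw [hL j hj1 hjN, hL j hj1 hjN]
              linarith [mul_le_mul_of_nonneg_left hw1 haj.le]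
          _ = u := hLX
      · rw [ehvfifLw_cons]
        calc u = L j X := hLX.symm
          _ < L j (ehvfifLw L W (t N)) := by
              rw [hL j hj1 hjN, hL j hj1 hjN]
              linarith [mul_lt_mul_of_pos_left hw2 haj]
  -- to the right of a cell there is an adjacent cell
  have hINr : t N ∈ Set.Icc (t 0) (t N) := ⟨tmono 0 N (Nat.zero_le _) le_rfl, le_rfl⟩
  have hINl : t 0 ∈ Set.Icc (t 0) (t N) := ⟨le_rfl, tmono 0 N (Nat.zero_le _) le_rfl⟩
  have leftcell : ∀ W : List ℕ, (∀ j ∈ W, 1 ≤ j ∧ j ≤ N) →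
      ehvfifLw L W (t N) < t N →
      ∃ W' : List ℕ, W'.length = W.length ∧ (∀ j ∈ W', 1 ≤ j ∧ j ≤ N) ∧
        ehvfifLw L W' (t 0) = ehvfifLw L W (t N) := by
    intro W
    induction W with
    | nil =>
      intro _ hlt
      rw [ehvfifLw_nil] at hlt
      exact absurd hlt (lt_irrefl _)
    | cons j W ih =>
      intro hW hlt
      have hj := hW j (List.mem_cons_self)
      have hWv : ∀ i ∈ W, 1 ≤ i ∧ i ≤ N := fun i hi => hW i (List.mem_cons_of_mem _ hi)
      have hz := LwMaps W hWv (t N) hINr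
      rcases eq_or_lt_of_le hz.2 with heq | hltz
      · have hcw : ehvfifLw L (j :: W) (t N) = t j := by
          rw [ehvfifLw_cons, heq, hLN j hj.1 hj.2]
        rw [hcw] at hlt
        have hjN : j < N := by
          rcases Nat.eq_or_lt_of_le hj.2 with rfl | h
          · exact absurd hlt (lt_irrefl _)
          · exact h
        have hrep : ∀ m : ℕ, ehvfifLw L (List.replicate m 1) (t 0) = t 0 := by
          intro m
          induction m with
          | zero => rfl
          | succ m ihm =>
            rw [List.replicate_succ, ehvfifLw_cons, ihm]
            simpa using hL0 1 le_rfl hN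
        refine ⟨(j + 1) :: List.replicate W.length 1, by simp, ?_, ?_⟩
        · intro i hi
          rcases List.mem_cons.mp hi with rfl | hi'
          · exact ⟨by omega, by omega⟩
          · have hi1 : i = 1 := List.eq_of_mem_replicate hi'
            rw [hi1]; exact ⟨le_rfl, hN⟩
        · rw [ehvfifLw_cons, hrep, hcw]
          have := hL0 (j + 1) (by omega) (by omega)
          simpa using this
      · obtain ⟨W', hlen, hW'v, heq'⟩ := ih hWv hltz
        refine ⟨j :: W', by simp [hlen], ?_, ?_⟩
        · intro i hi
          rcases List.mem_cons.mp hi with rfl | hi'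
          · exact ⟨hj.1, hj.2⟩
          · exact hW'v i hi'
        · rw [ehvfifLw_cons, ehvfifLw_cons, heq']
  -- covering by at most two adjacent cells
  have hrepN : ∀ m : ℕ, ehvfifLw L (List.replicate m N) (t N) = t N := by
    intro m
    induction m with
    | zero => rfl
    | succ m ihm =>
      rw [List.replicate_succ, ehvfifLw_cons, ihm, hLN N hN le_rfl]
  have cover : ∀ n : ℕ, ∀ u u' : ℝ, t 0 ≤ u → u ≤ u' → u' ≤ t N →
      u' - u ≤ amin ^ n * (t N - t 0) →
      ∃ z : ℝ, ∃ W₁ W₂ : List ℕ,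
        W₁.length = n ∧ W₂.length = n ∧
        (∀ j ∈ W₁, 1 ≤ j ∧ j ≤ N) ∧ (∀ j ∈ W₂, 1 ≤ j ∧ j ≤ N) ∧
        (∃ x ∈ Set.Icc (t 0) (t N), ehvfifLw L W₁ x = u) ∧
        (∃ y ∈ Set.Icc (t 0) (t N), ehvfifLw L W₁ y = z) ∧
        (∃ x ∈ Set.Icc (t 0) (t N), ehvfifLw L W₂ x = z) ∧
        (∃ y ∈ Set.Icc (t 0) (t N), ehvfifLw L W₂ y = u') := by
    intro n u u' h0 huu h1 hden
    by_cases hu : u < t N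
    · obtain ⟨W, hlen, hWv, hw1, hw2⟩ := rn2 n u h0 hu
      have hpre_u : ∃ x ∈ Set.Icc (t 0) (t N), ehvfifLw L W x = u :=
        LwPre W hWv u hw1 hw2.le
      by_cases hcase : u' ≤ ehvfifLw L W (t N)
      · have hpre_u' : ∃ y ∈ Set.Icc (t 0) (t N), ehvfifLw L W y = u' :=
          LwPre W hWv u' (hw1.trans huu) hcase
        exact ⟨u', W, W, hlen, hlen, hWv, hWv, hpre_u, hpre_u', hpre_u', hpre_u'⟩
      · push_neg at hcase
        have hzN : ehvfifLw L W (t N) < t N := lt_of_lt_of_le hcase h1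
        obtain ⟨W', hlen', hW'v, hW'0⟩ := leftcell W hWv hzN
        have hW'len : W'.length = n := hlen'.trans hlen
        have hlow := LwLower W' hW'v
        rw [hW'len, hW'0] at hlow
        have hu'le : u' ≤ ehvfifLw L W' (t N) := by linarith [hw2.le]
        have hpre_z1 : ∃ y ∈ Set.Icc (t 0) (t N),
            ehvfifLw L W y = ehvfifLw L W (t N) := ⟨t N, hINr, rfl⟩
        have hpre_z2 : ∃ x ∈ Set.Icc (t 0) (t N),
            ehvfifLw L W' x = ehvfifLw L W (t N) := ⟨t 0, hINl, hW'0⟩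
        have hpre_u' : ∃ y ∈ Set.Icc (t 0) (t N), ehvfifLw L W' y = u' :=
          LwPre W' hW'v u' (by rw [hW'0]; exact hcase.le) hu'le
        exact ⟨ehvfifLw L W (t N), W, W', hlen, hW'len, hWv, hW'v,
          hpre_u, hpre_z1, hpre_z2, hpre_u'⟩
    · have hueq : u = t N := le_antisymm (huu.trans h1) (not_lt.mp hu)
      have hu'eq : u' = t N := le_antisymm h1 (hueq ▸ huu)
      have hrv : ∀ i ∈ List.replicate n N, 1 ≤ i ∧ i ≤ N := by
        intro i hi
        have hi1 : i = N := List.eq_of_mem_replicate hi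
        rw [hi1]; exact ⟨hN, le_rfl⟩
      refine ⟨t N, List.replicate n N, List.replicate n N, by simp, by simp, hrv, hrv,
        ⟨t N, hINr, by rw [hrepN]; exact hueq.symm⟩,
        ⟨t N, hINr, hrepN n⟩, ⟨t N, hINr, hrepN n⟩,
        ⟨t N, hINr, by rw [hrepN]; exact hu'eq.symm⟩⟩
  -- the Hölder exponent
  have hamin1 : amin < 1 := lt_of_le_of_lt haminmax hamax1
  have haminθ : amin ≤ θ := haminmax.trans hθa.le
  obtain ⟨α, hαdef⟩ : ∃ α : ℝ, α = Real.log θ / Real.log amin := ⟨_, rfl⟩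
  have hlogamin : Real.log amin < 0 := Real.log_neg hamin0 hamin1
  have hlogθ : Real.log θ < 0 := Real.log_neg hθ0 hθ1
  have hα0 : 0 < α := by rw [hαdef]; exact div_pos_of_neg_of_neg hlogθ hlogamin
  have hll : Real.log amin ≤ Real.log θ := Real.log_le_log hamin0 haminθ
  have hα1 : α ≤ 1 := by
    have hby : Real.log θ / Real.log amin - 1
        = (Real.log θ - Real.log amin) / Real.log amin := by
      rw [sub_div, div_self (ne_of_lt hlogamin)]
    have h2 : (Real.log θ - Real.log amin) / Real.log amin ≤ 0 :=
      div_nonpos_of_nonneg_of_nonpos (sub_nonneg.mpr hll) hlogamin.le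
    have h3 : α - 1 ≤ 0 := by rw [hαdef, hby]; exact h2
    linarith
  -- θ ^ n = (amin ^ n) ^ α
  have hpow : ∀ n : ℕ, θ ^ n = (amin ^ n) ^ α := by
    intro n
    have hpos : (0:ℝ) < amin ^ n := pow_pos hamin0 n
    have h1 : (amin ^ n : ℝ) ^ α = Real.exp ((n : ℝ) * Real.log θ) := by
      rw [Real.rpow_def_of_pos hpos, Real.log_pow]
      congr 1
      rw [hαdef]
      field_simp [ne_of_lt hlogamin]
    have h2 : θ ^ n = Real.exp ((n : ℝ) * Real.log θ) := by
      rw [Real.exp_nat_mul, Real.exp_log hθ0]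
    rw [h1, h2]
  -- the final constant
  have hCq : (0:ℝ) < ((amin * (t N - t 0))⁻¹) ^ α :=
    Real.rpow_pos_of_pos (inv_pos.mpr (mul_pos hamin0 hT)) α
  refine ⟨2 * Ac * ((amin * (t N - t 0))⁻¹) ^ α, mul_pos (mul_pos two_pos hAc0) hCq, α, hα0, hα1, ?_⟩
  -- the main estimate for ordered pairs
  have key : ∀ u u' : ℝ, t 0 ≤ u → u < u' → u' ≤ t N →
      |(f u).1 - (f u').1|
        ≤ 2 * Ac * ((amin * (t N - t 0))⁻¹) ^ α * (u' - u) ^ α := by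
    intro u u' hu0 huu hu'N
    have hdpos : 0 < u' - u := sub_pos.mpr huu
    have hdT : u' - u ≤ t N - t 0 := by
      have := hu0; have := hu'N; linarith
    have hex : ∃ k : ℕ, amin ^ k * (t N - t 0) < u' - u := by
      obtain ⟨k, hk⟩ := exists_pow_lt_of_lt_one (div_pos hdpos hT) hamin1
      exact ⟨k, (lt_div_iff₀ hT).mp hk⟩
    set k₀ := Nat.find hex with hk₀def
    have hk₀spec := Nat.find_spec hex
    rw [← hk₀def] at hk₀spec
    have hk₀pos : k₀ ≠ 0 := by
      intro h
      have := hk₀spec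
      rw [h, pow_zero, one_mul] at this
      linarith
    set n := k₀ - 1 with hndef
    have hn1 : n + 1 = k₀ := by omega
    have hge : u' - u ≤ amin ^ n * (t N - t 0) := by
      have hmin := Nat.find_min hex (show n < k₀ by omega)
      push_neg at hmin
      exact hmin
    have hlt' : amin ^ (n + 1) * (t N - t 0) < u' - u := by
      rw [hn1]; exact hk₀spec
    obtain ⟨z, W₁, W₂, hl1, hl2, hv1, hv2, ⟨x₁, hx₁, he₁⟩, ⟨y₁, hy₁, he₂⟩,
      ⟨x₂, hx₂, he₃⟩, ⟨y₂, hy₂, he₄⟩⟩ := cover n u u' hu0 huu.le hu'N hge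
    have o1 : |(f u).1 - (f z).1| ≤ Ac * θ ^ n := by
      have ho := osc W₁ hv1 x₁ hx₁ y₁ hy₁
      rw [he₁, he₂, hl1] at ho
      exact (le_max_left _ _).trans ho
    have o2 : |(f z).1 - (f u').1| ≤ Ac * θ ^ n := by
      have ho := osc W₂ hv2 x₂ hx₂ y₂ hy₂
      rw [he₃, he₄, hl2] at ho
      exact (le_max_left _ _).trans ho
    have main : |(f u).1 - (f u').1| ≤ 2 * Ac * θ ^ n := by
      have htri := abs_sub_le (f u).1 (f z).1 (f u').1
      linarith
    have hb1 : amin ^ n ≤ (u' - u) * (amin * (t N - t 0))⁻¹ := by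
      have h2 : amin ^ (n + 1) * (t N - t 0) = amin ^ n * (amin * (t N - t 0)) := by
        ring
      rw [h2] at hlt'
      have h3 : (0:ℝ) < amin * (t N - t 0) := mul_pos hamin0 hT
      rw [← div_eq_mul_inv, le_div_iff₀ h3]
      exact hlt'.le
    have hb2 : θ ^ n ≤ ((u' - u) * (amin * (t N - t 0))⁻¹) ^ α := by
      rw [hpow n]
      exact Real.rpow_le_rpow (pow_nonneg hamin0.le n) hb1 hα0.le
    have hsplit : ((u' - u) * (amin * (t N - t 0))⁻¹) ^ α
        = (u' - u) ^ α * ((amin * (t N - t 0))⁻¹) ^ α :=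
      Real.mul_rpow hdpos.le (by positivity)
    calc |(f u).1 - (f u').1| ≤ 2 * Ac * θ ^ n := main
      _ ≤ 2 * Ac * ((u' - u) ^ α * ((amin * (t N - t 0))⁻¹) ^ α) := by
          have := mul_le_mul_of_nonneg_left (hb2.trans (le_of_eq hsplit))
            (show (0:ℝ) ≤ 2 * Ac by linarith)
          linarith
      _ = 2 * Ac * ((amin * (t N - t 0))⁻¹) ^ α * (u' - u) ^ α := by ring
  intro x hx y hy
  rcases lt_trichotomy x y with h | rfl | h
  · have hx' := key x y hx.1 h hy.2
    have habs : |x - y| = y - x := by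
      rw [abs_sub_comm]
      exact abs_of_pos (sub_pos.mpr h)
    rw [habs]
    exact hx'
  · simp only [sub_self, abs_zero, Real.zero_rpow (ne_of_gt hα0), mul_zero, le_refl]
  · have hx' := key y x hy.1 h hx.2
    have habs : |x - y| = x - y := abs_of_pos (sub_pos.mpr h)
    rw [habs, abs_sub_comm]
    exact hx'
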